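/- Let G be a D-regular graph and x~y adjacent vertices. Then there exists an optimal transport plan from μ_x to μ_y induced by a bijection T : B_1(x) → B_1(y) such that T(v) = v for all v ∈ B_1(x) ∩ B_1(y), and the cost of this plan, namely (1/(D+1))·Σ_{v∈B_1(x)} d(v, T(v)), equals W_1(μ_x, μ_y). -/

import Mathlib

open Finset

namespace BMS

open scoped Classical

variable {V : Type*}

/-- The uniform probability measure on the closed 1-ball of `x` in a `D`-regular graph. -/
noncomputable def mu (G : SimpleGraph V) (D : ℕ) (x : V) : V → ℝ :=
  fun v => if G.dist x v ≤ 1 then 1 / (D + 1) else 0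

/-- The L¹-Wasserstein distance between `μ_x` and `μ_y`, as an infimum over transport plans. -/
noncomputable def W1 (G : SimpleGraph V) [Fintype V] (D : ℕ) (x y : V) : ℝ :=
  sInf { c : ℝ | ∃ π : V → V → ℝ,
    (∀ u v, 0 ≤ π u v) ∧
    (∀ u, ∑ v, π u v = mu G D x u) ∧
    (∀ v, ∑ u, π u v = mu G D y v) ∧
    c = ∑ u, ∑ v, (G.dist u v : ℝ) * π u v }

/-- Ollivier Ricci curvature (Lin–Lu–Yau normalization for regular graphs). -/
noncomputable def kappa (G : SimpleGraph V) [Fintype V] (D : ℕ) (x y : V) : ℝ :=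
  ((D + 1) / D) * (1 - W1 G D x y)

/-- `G` is Bonnet–Myers sharp: the infimum of the curvature over edges equals `2 / L`. -/
def BMSharp (G : SimpleGraph V) [Fintype V] (D L : ℕ) : Prop :=
  sInf { k : ℝ | ∃ x y, G.Adj x y ∧ k = kappa G D x y } = 2 / (L : ℝ)

/-- Number of neighbors of `y` at distance `k` from `x0`. -/
noncomputable def sphDeg (G : SimpleGraph V) [Fintype V] (x0 y : V) (k : ℕ) : ℕ :=
  (Finset.univ.filter (fun v => G.Adj y v ∧ G.dist x0 v = k)).card

/-- Number of triangles containing the edge `x ~ y` (common neighbors of `x` and `y`). -/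
noncomputable def tri (G : SimpleGraph V) [Fintype V] (x y : V) : ℕ :=
  (Finset.univ.filter (fun v => G.Adj x v ∧ G.Adj y v)).card

/-- A good optimal transport map from `B_1(a)` to `B_1(b)`: a bijection between the 1-balls,
fixing exactly the vertices of `B_1(a) ∩ B_1(b)` (among the domain), whose cost realizes
the Wasserstein distance `W1 (μ_a, μ_b)`. -/
def goodMap (G : SimpleGraph V) [Fintype V] (D : ℕ) (a b : V) (T : V → V) : Prop :=
  Set.BijOn T {v | G.dist a v ≤ 1} {v | G.dist b v ≤ 1} ∧
  (∀ v, G.dist a v ≤ 1 → (T v = v ↔ G.dist b v ≤ 1)) ∧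
  (1 / (D + 1 : ℝ)) *
      ∑ v ∈ Finset.univ.filter (fun v => G.dist a v ≤ 1), (G.dist v (T v) : ℝ) =
    W1 G D a b

lemma mem_ball_iff {G : SimpleGraph V} (hconn : G.Connected) {x v : V} :
    G.dist x v ≤ 1 ↔ v = x ∨ G.Adj x v := by
  constructor
  · intro h
    rcases Nat.le_one_iff_eq_zero_or_eq_one.mp h with h0 | h1
    · exact Or.inl (hconn.dist_eq_zero_iff.mp h0).symm
    · exact Or.inr (SimpleGraph.dist_eq_one_iff_adj.mp h1)
  · rintro (rfl | h)
    · simp [SimpleGraph.dist_self]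
    · exact le_of_eq (SimpleGraph.dist_eq_one_iff_adj.mpr h)

lemma ball_card [Fintype V] {G : SimpleGraph V} (hconn : G.Connected) {D : ℕ}
    (hreg : G.IsRegularOfDegree D) (x : V) :
    (Finset.univ.filter (fun v => G.dist x v ≤ 1)).card = D + 1 := by
  have h : Finset.univ.filter (fun v => G.dist x v ≤ 1) = insert x (G.neighborFinset x) := by
    ext v
    simp [mem_ball_iff hconn, SimpleGraph.mem_neighborFinset]
  rw [h, Finset.card_insert_of_notMem (by simp),
    SimpleGraph.card_neighborFinset_eq_degree, hreg x]

theorem stmt [Fintype V] (G : SimpleGraph V) (hconn : G.Connected)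
    (D : ℕ) (hD : 0 < D) (hreg : G.IsRegularOfDegree D)
    (x y : V) (hxy : G.Adj x y) :
    ∃ T : V → V,
      Set.BijOn T {v | G.dist x v ≤ 1} {v | G.dist y v ≤ 1} ∧
      (∀ v, G.dist x v ≤ 1 → G.dist y v ≤ 1 → T v = v) ∧
      (1 / (D + 1 : ℝ)) *
          ∑ v ∈ Finset.univ.filter (fun v => G.dist x v ≤ 1), (G.dist v (T v) : ℝ)
        = W1 G D x y := by
  classical
  have hD1 : (0:ℝ) < (D:ℝ) + 1 := by positivity
  set A : Finset V := Finset.univ.filter (fun v => G.dist x v ≤ 1) with hA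
  set B : Finset V := Finset.univ.filter (fun v => G.dist y v ≤ 1) with hB
  have hmemA : ∀ v, v ∈ A ↔ G.dist x v ≤ 1 := fun v => by simp [hA]
  have hmemB : ∀ v, v ∈ B ↔ G.dist y v ≤ 1 := fun v => by simp [hB]
  have hAcard : A.card = D + 1 := ball_card hconn hreg x
  have hBcard : B.card = D + 1 := ball_card hconn hreg y
  set e : ↥A ≃ ↥B := Finset.equivOfCardEq (hAcard.trans hBcard.symm) with he
  set C : Equiv.Perm ↥A → ℝ := fun σ => ∑ a : ↥A, (G.dist (a:V) ((e (σ a)):V) : ℝ) with hC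
  set Tof : Equiv.Perm ↥A → V → V :=
    fun σ v => if h : v ∈ A then ((e (σ ⟨v, h⟩)) : V) else v with hTof
  have hTof_coe : ∀ (σ : Equiv.Perm ↥A) (a : ↥A), Tof σ (a : V) = ((e (σ a)) : V) := by
    intro σ a
    have heta : (⟨(a:V), a.2⟩ : ↥A) = a := Subtype.coe_eta a a.2
    calc Tof σ (a:V) = if h : (a:V) ∈ A then ((e (σ ⟨(a:V), h⟩)) : V) else (a:V) := rfl
      _ = ((e (σ a)) : V) := by rw [dif_pos a.2, heta]
  have hT_mapsto : ∀ (σ : Equiv.Perm ↥A) v, v ∈ A → Tof σ v ∈ B := by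
    intro σ v hv
    simp only [hTof]
    rw [dif_pos hv]
    exact (e (σ ⟨v, hv⟩)).2
  have hT_inj : ∀ (σ : Equiv.Perm ↥A), ∀ u, u ∈ A → ∀ v, v ∈ A → Tof σ u = Tof σ v → u = v := by
    intro σ u hu v hv huv
    simp only [hTof] at huv
    rw [dif_pos hu, dif_pos hv] at huv
    have h1 : σ ⟨u, hu⟩ = σ ⟨v, hv⟩ := e.injective (Subtype.ext huv)
    have h2 : (⟨u, hu⟩ : ↥A) = ⟨v, hv⟩ := σ.injective h1
    exact congrArg Subtype.val h2
  have hT_surj : ∀ (σ : Equiv.Perm ↥A), ∀ v, v ∈ B → ∃ u, u ∈ A ∧ Tof σ u = v := by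
    intro σ v hv
    refine ⟨((σ.symm (e.symm ⟨v, hv⟩)) : V), (σ.symm (e.symm ⟨v, hv⟩)).2, ?_⟩
    rw [hTof_coe, Equiv.apply_symm_apply, Equiv.apply_symm_apply]
  set planSet : Set ℝ := { c : ℝ | ∃ π : V → V → ℝ,
    (∀ u v, 0 ≤ π u v) ∧
    (∀ u, ∑ v, π u v = mu G D x u) ∧
    (∀ v, ∑ u, π u v = mu G D y v) ∧
    c = ∑ u, ∑ v, (G.dist u v : ℝ) * π u v } with hplanSet
  have hW1def : W1 G D x y = sInf planSet := by rw [hplanSet]; rfl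
  have plan_mem : ∀ σ : Equiv.Perm ↥A, (1 / ((D:ℝ) + 1)) * C σ ∈ planSet := by
    intro σ
    rw [hplanSet]
    refine ⟨fun u v => if u ∈ A ∧ Tof σ u = v then 1 / ((D:ℝ)+1) else 0, ?_, ?_, ?_, ?_⟩
    · intro u v
      dsimp only
      split
      · positivity
      · exact le_rfl
    · intro u
      by_cases hu : u ∈ A
      · have h1 : ∀ v, (if u ∈ A ∧ Tof σ u = v then 1/((D:ℝ)+1) else 0)
            = if Tof σ u = v then 1/((D:ℝ)+1) else 0 := by intro v; simp [hu]
        simp only [h1]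
        rw [Finset.sum_ite_eq]
        simp [mu, (hmemA u).mp hu]
      · have hud : ¬ G.dist x u ≤ 1 := fun h => hu ((hmemA u).mpr h)
        simp [hu, mu, hud]
    · intro v
      have hzero : ∀ u ∈ Finset.univ, u ∉ A →
          (if u ∈ A ∧ Tof σ u = v then 1/((D:ℝ)+1) else 0) = 0 := by
        intro u _ hu; simp [hu]
      rw [← Finset.sum_subset (Finset.subset_univ A) hzero]
      by_cases hv : v ∈ B
      · obtain ⟨u0, hu0A, hu0T⟩ := hT_surj σ v hv
        have hfilter : ∀ u ∈ A, (if u ∈ A ∧ Tof σ u = v then 1/((D:ℝ)+1) else 0)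
            = if u = u0 then 1/((D:ℝ)+1) else 0 := by
          intro u hu
          by_cases h : Tof σ u = v
          · rw [if_pos ⟨hu, h⟩, if_pos (hT_inj σ u hu u0 hu0A (h.trans hu0T.symm))]
          · rw [if_neg (fun hc => h hc.2), if_neg (fun hc => h (by rw [hc, hu0T]))]
        rw [Finset.sum_congr rfl hfilter, Finset.sum_ite_eq' A u0 (fun _ => 1/((D:ℝ)+1))]
        simp [hu0A, mu, (hmemB v).mp hv]
      · have hzero2 : ∀ u ∈ A, (if u ∈ A ∧ Tof σ u = v then 1/((D:ℝ)+1) else 0) = 0 := by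
          intro u hu
          rw [if_neg]
          rintro ⟨-, hTv⟩
          exact hv (hTv ▸ hT_mapsto σ u hu)
        rw [Finset.sum_congr rfl hzero2]
        have hvd : ¬ G.dist y v ≤ 1 := fun h => hv ((hmemB v).mpr h)
        simp [mu, hvd]
    · have hrow0 : ∀ u ∈ Finset.univ, u ∉ A →
          ∑ v, (G.dist u v : ℝ) * (if u ∈ A ∧ Tof σ u = v then 1/((D:ℝ)+1) else 0) = 0 := by
        intro u _ hu; simp [hu]
      rw [← Finset.sum_subset (Finset.subset_univ A) hrow0]
      have hinner : ∀ u ∈ A,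
          ∑ v, (G.dist u v : ℝ) * (if u ∈ A ∧ Tof σ u = v then 1/((D:ℝ)+1) else 0)
          = (G.dist u (Tof σ u) : ℝ) * (1/((D:ℝ)+1)) := by
        intro u hu
        have h1 : ∀ v, (G.dist u v : ℝ) * (if u ∈ A ∧ Tof σ u = v then 1/((D:ℝ)+1) else 0)
            = if Tof σ u = v then (G.dist u v : ℝ) * (1/((D:ℝ)+1)) else 0 := by
          intro v; simp [hu, mul_ite]
        simp only [h1]
        rw [Finset.sum_ite_eq]
        simp
      rw [Finset.sum_congr rfl hinner, ← Finset.sum_mul, mul_comm]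
      congr 1
      rw [hC]
      simp only
      rw [← Finset.sum_coe_sort A (fun u => (G.dist u (Tof σ u) : ℝ))]
      exact Finset.sum_congr rfl (fun a _ => by rw [hTof_coe])
  have hnonneg : ∀ c ∈ planSet, (0:ℝ) ≤ c := by
    rintro c ⟨π, hpos, -, -, rfl⟩
    exact Finset.sum_nonneg fun u _ =>
      Finset.sum_nonneg fun v _ => mul_nonneg (Nat.cast_nonneg _) (hpos u v)
  obtain ⟨σ₀, -, hσ₀⟩ := Finset.exists_min_image (Finset.univ : Finset (Equiv.Perm ↥A)) C
    ⟨1, Finset.mem_univ 1⟩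
  have lower : ∀ c ∈ planSet, (1/((D:ℝ)+1)) * C σ₀ ≤ c := by
    rintro c ⟨π, hpos, hrow, hcol, rfl⟩
    have hπA : ∀ u, u ∉ A → ∀ v, π u v = 0 := by
      intro u hu v
      have hd : ¬ G.dist x u ≤ 1 := fun h => hu ((hmemA u).mpr h)
      have h0 : ∑ w, π u w = 0 := by rw [hrow u]; simp [mu, hd]
      exact (Finset.sum_eq_zero_iff_of_nonneg (fun i _ => hpos u i)).mp h0 v (Finset.mem_univ v)
    have hπB : ∀ v, v ∉ B → ∀ u, π u v = 0 := by
      intro v hv u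
      have hd : ¬ G.dist y v ≤ 1 := fun h => hv ((hmemB v).mpr h)
      have h0 : ∑ w, π w v = 0 := by rw [hcol v]; simp [mu, hd]
      exact (Finset.sum_eq_zero_iff_of_nonneg (fun i _ => hpos i v)).mp h0 u (Finset.mem_univ u)
    set M : Matrix ↥A ↥A ℝ := fun a a' => ((D:ℝ)+1) * π (a:V) ((e a' : V)) with hM
    have hsumB : ∀ u : V, ∑ a' : ↥A, π u ((e a' : V)) = ∑ w, π u w := by
      intro u
      rw [Equiv.sum_comp e (fun b : ↥B => π u (b:V)), Finset.sum_coe_sort B (fun w => π u w)]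
      exact Finset.sum_subset (Finset.subset_univ B) (fun w _ hw => hπB w hw u)
    have hsumA : ∀ v : V, ∑ a : ↥A, π (a:V) v = ∑ w, π w v := by
      intro v
      rw [Finset.sum_coe_sort A (fun w => π w v)]
      exact Finset.sum_subset (Finset.subset_univ A) (fun w _ hw => hπA w hw v)
    have hMds : M ∈ doublyStochastic ℝ ↥A := by
      rw [mem_doublyStochastic_iff_sum]
      refine ⟨fun a a' => mul_nonneg hD1.le (hpos _ _), fun a => ?_, fun a' => ?_⟩
      · rw [hM]
        simp only
        rw [← Finset.mul_sum, hsumB, hrow]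
        have hda : G.dist x (a:V) ≤ 1 := (hmemA _).mp a.2
        simp [mu, hda]
        field_simp
      · rw [hM]
        simp only
        rw [← Finset.mul_sum, hsumA, hcol]
        have hda : G.dist y ((e a' : V)) ≤ 1 := (hmemB _).mp (e a').2
        simp [mu, hda]
        field_simp
    obtain ⟨w, hw0, hw1, hwM⟩ := exists_eq_sum_perm_of_mem_doublyStochastic hMds
    have hMentry : ∀ a a', M a a' = ∑ σ : Equiv.Perm ↥A, w σ * (σ.permMatrix ℝ) a a' := by
      intro a a'
      rw [← hwM]
      simp [Matrix.sum_apply, Matrix.smul_apply, smul_eq_mul]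
    have hcostσ : ∀ σ : Equiv.Perm ↥A,
        ∑ a : ↥A, ∑ a' : ↥A, (G.dist (a:V) ((e a':V)) : ℝ) * (σ.permMatrix ℝ) a a' = C σ := by
      intro σ
      rw [hC]
      simp only
      refine Finset.sum_congr rfl fun a _ => ?_
      have h1 : ∀ a' : ↥A, (G.dist (a:V) ((e a':V)) : ℝ) * (σ.permMatrix ℝ) a a'
          = if σ a = a' then (G.dist (a:V) ((e a':V)) : ℝ) else 0 := by
        intro a'
        simp [Equiv.Perm.permMatrix, PEquiv.toMatrix_apply, Equiv.toPEquiv_apply, mul_ite]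
      simp only [h1]
      rw [Finset.sum_ite_eq]
      simp
    have hcost : ∑ u, ∑ v, (G.dist u v : ℝ) * π u v
        = (1/((D:ℝ)+1)) * ∑ a : ↥A, ∑ a' : ↥A, (G.dist (a:V) ((e a':V)) : ℝ) * M a a' := by
      have h1 : ∑ u, ∑ v, (G.dist u v : ℝ) * π u v
          = ∑ u ∈ A, ∑ v, (G.dist u v : ℝ) * π u v :=
        (Finset.sum_subset (Finset.subset_univ A) (fun u _ hu =>
          Finset.sum_eq_zero fun v _ => by rw [hπA u hu v, mul_zero])).symm
      have h2 : ∀ u ∈ A, ∑ v, (G.dist u v : ℝ) * π u v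
          = ∑ v ∈ B, (G.dist u v : ℝ) * π u v :=
        fun u _ => (Finset.sum_subset (Finset.subset_univ B) (fun v _ hv => by
          rw [hπB v hv u, mul_zero])).symm
      rw [h1, Finset.sum_congr rfl h2,
        ← Finset.sum_coe_sort A (fun u => ∑ v ∈ B, (G.dist u v : ℝ) * π u v)]
      have h3 : ∀ a : ↥A, ∑ v ∈ B, (G.dist (a:V) v : ℝ) * π (a:V) v
          = ∑ a' : ↥A, (G.dist (a:V) ((e a':V)) : ℝ) * π (a:V) ((e a':V)) := by
        intro a
        rw [← Finset.sum_coe_sort B (fun v => (G.dist (a:V) v : ℝ) * π (a:V) v)]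
        exact (Equiv.sum_comp e (fun b : ↥B => (G.dist (a:V) (b:V) : ℝ) * π (a:V) (b:V))).symm
      rw [Finset.sum_congr rfl (fun a _ => h3 a), Finset.mul_sum]
      refine Finset.sum_congr rfl fun a _ => ?_
      rw [Finset.mul_sum]
      refine Finset.sum_congr rfl fun a' _ => ?_
      rw [hM]
      simp only
      field_simp
    have hfinal : ∑ a : ↥A, ∑ a' : ↥A, (G.dist (a:V) ((e a':V)) : ℝ) * M a a'
        = ∑ σ : Equiv.Perm ↥A, w σ * C σ := by
      have swap1 : ∀ a : ↥A, ∑ a' : ↥A, ∑ σ : Equiv.Perm ↥A,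
          (G.dist (a:V) ((e a':V)) : ℝ) * (w σ * (σ.permMatrix ℝ) a a')
          = ∑ σ : Equiv.Perm ↥A, ∑ a' : ↥A,
          (G.dist (a:V) ((e a':V)) : ℝ) * (w σ * (σ.permMatrix ℝ) a a') :=
        fun a => Finset.sum_comm
      calc ∑ a : ↥A, ∑ a' : ↥A, (G.dist (a:V) ((e a':V)) : ℝ) * M a a'
          = ∑ a : ↥A, ∑ a' : ↥A, ∑ σ : Equiv.Perm ↥A,
            (G.dist (a:V) ((e a':V)) : ℝ) * (w σ * (σ.permMatrix ℝ) a a') := by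
            refine Finset.sum_congr rfl fun a _ => Finset.sum_congr rfl fun a' _ => ?_
            rw [hMentry, Finset.mul_sum]
        _ = ∑ a : ↥A, ∑ σ : Equiv.Perm ↥A, ∑ a' : ↥A,
            (G.dist (a:V) ((e a':V)) : ℝ) * (w σ * (σ.permMatrix ℝ) a a') :=
            Finset.sum_congr rfl fun a _ => swap1 a
        _ = ∑ σ : Equiv.Perm ↥A, ∑ a : ↥A, ∑ a' : ↥A,
            (G.dist (a:V) ((e a':V)) : ℝ) * (w σ * (σ.permMatrix ℝ) a a') := Finset.sum_comm
        _ = ∑ σ : Equiv.Perm ↥A, w σ * C σ := by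
            refine Finset.sum_congr rfl fun σ _ => ?_
            rw [← hcostσ σ, Finset.mul_sum]
            refine Finset.sum_congr rfl fun a _ => ?_
            rw [Finset.mul_sum]
            refine Finset.sum_congr rfl fun a' _ => ?_
            ring
    have hmin : C σ₀ ≤ ∑ σ : Equiv.Perm ↥A, w σ * C σ := by
      calc C σ₀ = ∑ σ : Equiv.Perm ↥A, w σ * C σ₀ := by rw [← Finset.sum_mul, hw1, one_mul]
        _ ≤ ∑ σ : Equiv.Perm ↥A, w σ * C σ := Finset.sum_le_sum fun σ _ =>
            mul_le_mul_of_nonneg_left (hσ₀ σ (Finset.mem_univ σ)) (hw0 σ)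
    rw [hcost, hfinal]
    exact mul_le_mul_of_nonneg_left hmin (by positivity)
  have hW1 : W1 G D x y = (1/((D:ℝ)+1)) * C σ₀ := by
    rw [hW1def]
    exact le_antisymm (csInf_le ⟨0, hnonneg⟩ (plan_mem σ₀)) (le_csInf ⟨_, plan_mem σ₀⟩ lower)
  -- exchange argument
  have exchange : ∀ n : ℕ, ∀ σ : Equiv.Perm ↥A, C σ = C σ₀ →
      (Finset.univ.filter (fun a : ↥A => (a:V) ∈ B ∧ ((e (σ a)):V) ≠ (a:V))).card ≤ n →
      ∃ τ : Equiv.Perm ↥A, C τ = C σ₀ ∧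
        ∀ a : ↥A, (a:V) ∈ B → ((e (τ a)):V) = (a:V) := by
    intro n
    induction n with
    | zero =>
      intro σ hσ hcard
      refine ⟨σ, hσ, fun a haB => ?_⟩
      by_contra hne
      have hmem : a ∈ Finset.univ.filter
          (fun a : ↥A => (a:V) ∈ B ∧ ((e (σ a)):V) ≠ (a:V)) :=
        Finset.mem_filter.mpr ⟨Finset.mem_univ a, haB, hne⟩
      have := Finset.card_pos.mpr ⟨a, hmem⟩
      omega
    | succ n ih =>
      intro σ hσ hcard
      by_cases h0 : (Finset.univ.filter
          (fun a : ↥A => (a:V) ∈ B ∧ ((e (σ a)):V) ≠ (a:V))).card = 0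
      · exact ih σ hσ (by omega)
      · obtain ⟨a, ha⟩ := Finset.card_pos.mp (Nat.pos_of_ne_zero h0)
        rw [Finset.mem_filter] at ha
        obtain ⟨-, haB, hane⟩ := ha
        set a' : ↥A := σ.symm (e.symm ⟨(a:V), haB⟩) with ha'
        have hσa' : ((e (σ a')) : V) = (a:V) := by
          rw [ha', Equiv.apply_symm_apply, Equiv.apply_symm_apply]
        have haa' : a ≠ a' := by
          intro h
          rw [← h] at hσa'
          exact hane hσa'
        set τ : Equiv.Perm ↥A := σ * Equiv.swap a a' with hτ
        have hτa : τ a = σ a' := by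
          rw [hτ]; simp [Equiv.Perm.mul_apply, Equiv.swap_apply_left]
        have hτa' : τ a' = σ a := by
          rw [hτ]; simp [Equiv.Perm.mul_apply, Equiv.swap_apply_right]
        have hτc : ∀ c, c ≠ a → c ≠ a' → τ c = σ c := by
          intro c h1 h2
          rw [hτ]; simp [Equiv.Perm.mul_apply, Equiv.swap_apply_of_ne_of_ne h1 h2]
        have decomp : ∀ ρ : Equiv.Perm ↥A, C ρ =
            (G.dist (a:V) ((e (ρ a)):V) : ℝ) + ((G.dist (a':V) ((e (ρ a')):V) : ℝ) +
              ∑ c ∈ (Finset.univ.erase a).erase a', (G.dist (c:V) ((e (ρ c)):V) : ℝ)) := by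
          intro ρ
          rw [hC]
          simp only
          rw [← Finset.add_sum_erase _ _ (Finset.mem_univ a)]
          congr 1
          rw [← Finset.add_sum_erase _ _
            (Finset.mem_erase.mpr ⟨Ne.symm haa', Finset.mem_univ a'⟩)]
        have hcost' : C τ ≤ C σ := by
          rw [decomp τ, decomp σ]
          have hrest : ∑ c ∈ (Finset.univ.erase a).erase a', (G.dist (c:V) ((e (τ c)):V) : ℝ)
              = ∑ c ∈ (Finset.univ.erase a).erase a', (G.dist (c:V) ((e (σ c)):V) : ℝ) := by
            refine Finset.sum_congr rfl fun c hc => ?_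
            rw [Finset.mem_erase] at hc
            have hc2 := Finset.mem_erase.mp hc.2
            rw [hτc c hc2.1 hc.1]
          rw [hrest, hτa, hτa']
          have h0' : (G.dist (a:V) ((e (σ a')):V) : ℝ) = 0 := by rw [hσa']; simp
          have h2 : (G.dist (a':V) ((e (σ a')):V) : ℝ) = (G.dist (a':V) (a:V) : ℝ) := by
            rw [hσa']
          have htri := hconn.dist_triangle (u := (a':V)) (v := (a:V)) (w := ((e (σ a)):V))
          have htri' : (G.dist (a':V) ((e (σ a)):V) : ℝ)
              ≤ (G.dist (a':V) (a:V) : ℝ) + (G.dist (a:V) ((e (σ a)):V) : ℝ) := by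
            exact_mod_cast htri
          linarith
        have hCτ : C τ = C σ₀ := by
          rw [hσ] at hcost'
          exact le_antisymm hcost' (hσ₀ τ (Finset.mem_univ τ))
        have hsub : (Finset.univ.filter
              (fun c : ↥A => (c:V) ∈ B ∧ ((e (τ c)):V) ≠ (c:V)))
            ⊆ (Finset.univ.filter
              (fun c : ↥A => (c:V) ∈ B ∧ ((e (σ c)):V) ≠ (c:V))).erase a := by
          intro c hc
          rw [Finset.mem_filter] at hc
          obtain ⟨-, hcB, hcne⟩ := hc
          have hca : c ≠ a := by
            intro h
            subst h
            exact hcne (by rw [hτa, hσa'])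
          rw [Finset.mem_erase, Finset.mem_filter]
          refine ⟨hca, Finset.mem_univ c, hcB, ?_⟩
          by_cases hca' : c = a'
          · subst hca'
            rw [hσa']
            intro h
            exact haa' (Subtype.ext h)
          · rw [hτc c hca hca'] at hcne
            exact hcne
        have hcard' : (Finset.univ.filter
            (fun c : ↥A => (c:V) ∈ B ∧ ((e (τ c)):V) ≠ (c:V))).card ≤ n := by
          have ha_mem : a ∈ Finset.univ.filter
              (fun c : ↥A => (c:V) ∈ B ∧ ((e (σ c)):V) ≠ (c:V)) :=
            Finset.mem_filter.mpr ⟨Finset.mem_univ a, haB, hane⟩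
          have hle := Finset.card_le_card hsub
          have herase := Finset.card_erase_of_mem ha_mem
          have hpos := Finset.card_pos.mpr ⟨a, ha_mem⟩
          omega
        exact ih τ hCτ hcard'
  obtain ⟨τ, hCτ, hfix⟩ := exchange _ σ₀ rfl le_rfl
  refine ⟨Tof τ, ⟨fun v hv => (hmemB _).mp (hT_mapsto τ v ((hmemA v).mpr hv)),
    fun u hu v hv huv => hT_inj τ u ((hmemA u).mpr hu) v ((hmemA v).mpr hv) huv,
    fun v hv => ?_⟩, fun v hvx hvy => ?_, ?_⟩
  · obtain ⟨u, huA, hTu⟩ := hT_surj τ v ((hmemB v).mpr hv)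
    exact ⟨u, (hmemA u).mp huA, hTu⟩
  · have hvA : v ∈ A := (hmemA v).mpr hvx
    have hvB : v ∈ B := (hmemB v).mpr hvy
    have hTv : Tof τ v = ((e (τ ⟨v, hvA⟩)):V) := by
      simp only [hTof]
      rw [dif_pos hvA]
    rw [hTv]
    exact hfix ⟨v, hvA⟩ hvB
  · rw [hW1, ← hCτ]
    congr 1
    rw [hC]
    simp only
    rw [← Finset.sum_coe_sort A (fun v => (G.dist v (Tof τ v) : ℝ))]
    exact (Finset.sum_congr rfl (fun a _ => by rw [hTof_coe])).symm

end BMS
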